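/- The Chow rank of the elementary symmetric polynomial e_{2l+1}(x₁,…,x_{n+1}) is at most binomial(n−l, l), and the Chow rank of e_{2l}(x₁,…,x_n) is at most binomial(n−l, l): each is a sum of that many products of linear forms. -/

import Mathlib

open MvPolynomial



open MvPolynomial Finset

noncomputable section ChowAux

noncomputable def tval (t : List (Finset ℕ)) : MvPolynomial ℕ ℝ :=
  (t.map (fun A => ∑ i ∈ A, (X i : MvPolynomial ℕ ℝ))).prod

noncomputable def Pm (d m : ℕ) : MvPolynomial ℕ ℝ :=
  ∑ S ∈ (Finset.range m).powersetCard d, ∏ i ∈ S, X i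

def Sev : ℕ → ℕ → Multiset (List (Finset ℕ))
  | 0, j => if 1 ≤ j then {[Finset.range j, {j}]} else 0
  | l+1, j => (Multiset.range (j-1)).bind fun k =>
      (Sev l k).map fun t => t ++ [Finset.Ioo k j, {j}]

def Dod : ℕ → ℕ → Multiset (List (Finset ℕ))
  | 0, m => {[Finset.range m]}
  | l+1, m => (Multiset.range (m-1)).bind fun j =>
      (Sev l j).map fun t => t ++ [Finset.Ioo j m]

def Dev : ℕ → ℕ → Multiset (List (Finset ℕ))
  | 0, _ => {[]}
  | l+1, m => (Multiset.range m).bind fun j => Sev l j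

lemma Pm_zero (m : ℕ) : Pm 0 m = 1 := by
  simp [Pm, Finset.powersetCard_zero]

lemma Pm_succ_zero (d : ℕ) : Pm (d+1) 0 = 0 := by
  rw [Pm, Finset.range_zero, Finset.powersetCard_eq_empty.2 (by simp), Finset.sum_empty]

lemma Pm_one (m : ℕ) : Pm 1 m = ∑ i ∈ Finset.range m, X i := by
  simp [Pm, Finset.powersetCard_one]

lemma Pm_rec (d m : ℕ) : Pm (d+1) m = ∑ j ∈ Finset.range m, Pm d j * X j := by
  induction m with
  | zero => simp [Pm_succ_zero]
  | succ m ih =>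
      rw [Finset.sum_range_succ, ← ih]
      have hms : (m : ℕ) ∉ Finset.range m := by simp
      rw [Pm, Finset.range_add_one, Finset.powersetCard_succ_insert hms,
        Finset.sum_union, Finset.sum_image]
      · congr 1
        rw [Pm, Finset.sum_mul]
        apply Finset.sum_congr rfl
        intro S hS
        have hmS : m ∉ S := fun h => hms ((Finset.mem_powersetCard.1 hS).1 h)
        rw [Finset.prod_insert hmS, mul_comm]
      · intro a ha b hb hab
        have hma : m ∉ a := fun h => hms ((Finset.mem_powersetCard.1 ha).1 h)
        have hmb : m ∉ b := fun h => hms ((Finset.mem_powersetCard.1 hb).1 h)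
        rw [← Finset.erase_insert hma, ← Finset.erase_insert hmb, hab]
      · rw [Finset.disjoint_right]
        intro S hS hS'
        obtain ⟨T, hT, rfl⟩ := Finset.mem_image.1 hS
        have : m ∈ insert m T := Finset.mem_insert_self _ _
        exact hms ((Finset.mem_powersetCard.1 hS').1 this)

lemma swap_sum {M : Type*} [AddCommMonoid M] (f : ℕ → ℕ → M) (m : ℕ) :
    ∑ k ∈ Finset.range (m-1), ∑ i ∈ Finset.Ioo k m, f k i
      = ∑ i ∈ Finset.range m, ∑ k ∈ Finset.range i, f k i := by
  induction m with
  | zero => simp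
  | succ m ih =>
      rw [Finset.sum_range_succ (f := fun i => ∑ k ∈ Finset.range i, f k i), ← ih,
        Nat.add_sub_cancel]
      have h1 : ∀ k ∈ Finset.range m, ∑ i ∈ Finset.Ioo k (m+1), f k i
          = (∑ i ∈ Finset.Ioo k m, f k i) + f k m := by
        intro k hk
        have hk' := Finset.mem_range.1 hk
        have : Finset.Ioo k (m+1) = insert m (Finset.Ioo k m) := by
          ext x; simp [Finset.mem_Ioo, Finset.mem_insert]; omega
        rw [this, Finset.sum_insert (by simp), add_comm]
      rw [Finset.sum_congr rfl h1, Finset.sum_add_distrib]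
      congr 1
      cases m with
      | zero => simp
      | succ m' =>
          rw [Finset.sum_range_succ, Nat.add_sub_cancel]
          have : Finset.Ioo m' (m'+1) = ∅ := by
            ext x; simp [Finset.mem_Ioo]
          rw [this, Finset.sum_empty, add_zero]

lemma bind_range_map_sum {α β : Type*} [AddCommMonoid β] (n : ℕ) (f : ℕ → Multiset α)
    (g : α → β) :
    (((Multiset.range n).bind f).map g).sum = ∑ k ∈ Finset.range n, ((f k).map g).sum := by
  rw [Multiset.map_bind, Multiset.sum_bind, Finset.sum_eq_multiset_sum, Finset.range_val]

lemma tval_append1 (t : List (Finset ℕ)) (A : Finset ℕ) :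
    tval (t ++ [A]) = tval t * ∑ i ∈ A, X i := by
  simp [tval]

lemma tval_append2 (t : List (Finset ℕ)) (A B : Finset ℕ) :
    tval (t ++ [A, B]) = tval t * (∑ i ∈ A, X i) * (∑ i ∈ B, X i) := by
  simp [tval, mul_assoc]

lemma Sev_sum (l : ℕ) : ∀ j, ((Sev l j).map tval).sum = Pm (2*l+1) j * X j := by
  induction l with
  | zero =>
      intro j
      cases j with
      | zero => simp [Sev, Pm_succ_zero]
      | succ j' =>
          rw [Sev, if_pos (by omega : 1 ≤ j'+1), show (2*0+1) = 1 by ring, Pm_one]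
          simp [tval]
  | succ l ih =>
      intro j
      rw [Sev, bind_range_map_sum]
      have step : ∀ k ∈ Finset.range (j-1),
          (((Sev l k).map fun t => t ++ [Finset.Ioo k j, {j}]).map tval).sum
            = Pm (2*l+1) k * X k * ((∑ i ∈ Finset.Ioo k j, X i) * X j) := by
        intro k _
        rw [Multiset.map_map]
        have : (tval ∘ fun t => t ++ [Finset.Ioo k j, {j}])
            = fun t => tval t * ((∑ i ∈ Finset.Ioo k j, X i) * (∑ i ∈ ({j} : Finset ℕ), X i)) := by
          funext t; simp [tval_append2, mul_assoc]
        rw [this]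
        rw [Multiset.sum_map_mul_right, ih k, Finset.sum_singleton]
      rw [Finset.sum_congr rfl step]
      have expand : ∀ k ∈ Finset.range (j-1),
          Pm (2*l+1) k * X k * ((∑ i ∈ Finset.Ioo k j, X i) * X j)
            = ∑ i ∈ Finset.Ioo k j, (Pm (2*l+1) k * X k * X i) * X j := by
        intro k _
        rw [Finset.sum_mul, Finset.mul_sum]
        apply Finset.sum_congr rfl
        intro i _; ring
      rw [Finset.sum_congr rfl expand]
      rw [swap_sum (fun k i => (Pm (2*l+1) k * X k * X i) * X j) j]
      have inner : ∀ i ∈ Finset.range j,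
          ∑ k ∈ Finset.range i, (Pm (2*l+1) k * X k * X i) * X j
            = (Pm (2*l+2) i * X i) * X j := by
        intro i _
        rw [show (2*l+2) = (2*l+1)+1 by ring, Pm_rec]
        rw [Finset.sum_mul, Finset.sum_mul]
      rw [Finset.sum_congr rfl inner, ← Finset.sum_mul, ← Pm_rec (2*l+2) j,
        show 2*l+2+1 = 2*(l+1)+1 by ring]

lemma Dod_sum (l m : ℕ) : ((Dod l m).map tval).sum = Pm (2*l+1) m := by
  cases l with
  | zero =>
      rw [Dod, show (2*0+1) = 1 by ring, Pm_one]
      simp [tval]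
  | succ l =>
      rw [Dod, bind_range_map_sum]
      have step : ∀ j ∈ Finset.range (m-1),
          (((Sev l j).map fun t => t ++ [Finset.Ioo j m]).map tval).sum
            = ∑ i ∈ Finset.Ioo j m, Pm (2*l+1) j * X j * X i := by
        intro j _
        rw [Multiset.map_map]
        have : (tval ∘ fun t => t ++ [Finset.Ioo j m])
            = fun t => tval t * (∑ i ∈ Finset.Ioo j m, X i) := by
          funext t; simp [tval_append1]
        rw [this, Multiset.sum_map_mul_right, Sev_sum l j, Finset.mul_sum]
      rw [Finset.sum_congr rfl step, swap_sum (fun j i => Pm (2*l+1) j * X j * X i) m]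
      have inner : ∀ i ∈ Finset.range m,
          ∑ k ∈ Finset.range i, Pm (2*l+1) k * X k * X i = Pm (2*l+2) i * X i := by
        intro i _
        rw [show (2*l+2) = (2*l+1)+1 by ring, Pm_rec, Finset.sum_mul]
      rw [Finset.sum_congr rfl inner, ← Pm_rec (2*l+2) m, show 2*l+2+1 = 2*(l+1)+1 by ring]

lemma Dev_sum (l m : ℕ) : ((Dev l m).map tval).sum = Pm (2*l) m := by
  cases l with
  | zero => simp [Dev, tval, Pm_zero]
  | succ l =>
      rw [Dev, bind_range_map_sum]
      have step : ∀ j ∈ Finset.range m,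
          ((Sev l j).map tval).sum = Pm (2*l+1) j * X j := fun j _ => Sev_sum l j
      rw [Finset.sum_congr rfl step, ← Pm_rec (2*l+1) m, show 2*l+1+1 = 2*(l+1) by ring]

lemma hockey (a b : ℕ) (hb : 1 ≤ b) (m : ℕ) :
    ∑ j ∈ Finset.range m, Nat.choose (j - a) b = Nat.choose (m - a) (b+1) := by
  induction m with
  | zero =>
      rw [Finset.sum_range_zero, Nat.zero_sub, Nat.choose_eq_zero_of_lt (by omega)]
  | succ m ih =>
      rw [Finset.sum_range_succ, ih]
      rcases Nat.lt_or_ge m a with h | h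
      · rw [Nat.sub_eq_zero_of_le (by omega), Nat.sub_eq_zero_of_le (by omega),
          Nat.choose_eq_zero_of_lt (show 0 < b by omega), add_zero]
      · rw [show m + 1 - a = (m - a) + 1 by omega, Nat.choose_succ_succ']
        omega

lemma ite_sum (m : ℕ) : ∑ j ∈ Finset.range m, (if 1 ≤ j then 1 else 0) = m - 1 := by
  induction m with
  | zero => simp
  | succ m ihm =>
      rw [Finset.sum_range_succ, ihm]
      rcases Nat.eq_zero_or_pos m with rfl | hm
      · simp
      · rw [if_pos (by omega)]; omega

lemma Sev_card_sum (l : ℕ) : ∀ m, ∑ j ∈ Finset.range m, Multiset.card (Sev l j)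
    ≤ Nat.choose (m - (l+1)) (l+1) := by
  induction l with
  | zero =>
      intro m
      have : ∀ j ∈ Finset.range m, Multiset.card (Sev 0 j) = (if 1 ≤ j then 1 else 0) := by
        intro j _
        rw [Sev]
        split <;> simp
      rw [Finset.sum_congr rfl this, Nat.choose_one_right, ite_sum]
  | succ l ih =>
      intro m
      have hcard : ∀ j ∈ Finset.range m, Multiset.card (Sev (l+1) j)
          ≤ Nat.choose (j - (l+2)) (l+1) := by
        intro j _
        rw [Sev, Multiset.card_bind]
        have : (Multiset.map (Multiset.card ∘ fun k => (Sev l k).map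
            fun t => t ++ [Finset.Ioo k j, {j}]) (Multiset.range (j-1))).sum
            = ∑ k ∈ Finset.range (j-1), Multiset.card (Sev l k) := by
          rw [Finset.sum_eq_multiset_sum, Finset.range_val]
          congr 1
          apply Multiset.map_congr rfl
          intro k _
          simp [Multiset.card_map]
        rw [this]
        calc ∑ k ∈ Finset.range (j-1), Multiset.card (Sev l k)
            ≤ Nat.choose ((j-1) - (l+1)) (l+1) := ih (j-1)
          _ = Nat.choose (j - (l+2)) (l+1) := by congr 1; omega
      calc ∑ j ∈ Finset.range m, Multiset.card (Sev (l+1) j)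
          ≤ ∑ j ∈ Finset.range m, Nat.choose (j - (l+2)) (l+1) :=
            Finset.sum_le_sum hcard
        _ = Nat.choose (m - (l+2)) (l+2) := hockey (l+2) (l+1) (by omega) m

lemma Dod_card (l m : ℕ) : Multiset.card (Dod l m) ≤ Nat.choose (m - 1 - l) l := by
  cases l with
  | zero => simp [Dod]
  | succ l =>
      rw [Dod, Multiset.card_bind]
      have : (Multiset.map (Multiset.card ∘ fun j => (Sev l j).map
          fun t => t ++ [Finset.Ioo j m]) (Multiset.range (m-1))).sum
          = ∑ j ∈ Finset.range (m-1), Multiset.card (Sev l j) := by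
        rw [Finset.sum_eq_multiset_sum, Finset.range_val]
        congr 1
        apply Multiset.map_congr rfl
        intro j _
        simp [Multiset.card_map]
      rw [this]
      calc ∑ j ∈ Finset.range (m-1), Multiset.card (Sev l j)
          ≤ Nat.choose ((m-1) - (l+1)) (l+1) := Sev_card_sum l (m-1)

lemma Dev_card (l m : ℕ) : Multiset.card (Dev l m) ≤ Nat.choose (m - l) l := by
  cases l with
  | zero => simp [Dev]
  | succ l =>
      rw [Dev, Multiset.card_bind]
      have : (Multiset.map (Multiset.card ∘ fun j => Sev l j) (Multiset.range m)).sum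
          = ∑ j ∈ Finset.range m, Multiset.card (Sev l j) := by
        rw [Finset.sum_eq_multiset_sum, Finset.range_val]; rfl
      rw [this]
      exact Sev_card_sum l m

lemma Dev_zero_card (m : ℕ) : Multiset.card (Dev 0 m) = 1 := by simp [Dev]

lemma Sev_len (l : ℕ) : ∀ j, ∀ t ∈ Sev l j, t.length = 2*l+2 := by
  induction l with
  | zero =>
      intro j t ht
      rw [Sev] at ht
      split at ht
      · rw [Multiset.mem_singleton.1 ht]; rfl
      · simp at ht
  | succ l ih =>
      intro j t ht
      rw [Sev] at ht
      obtain ⟨k, hk, ht⟩ := Multiset.mem_bind.1 ht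
      obtain ⟨u, hu, rfl⟩ := Multiset.mem_map.1 ht
      rw [List.length_append, ih k _ hu]
      simp; omega

lemma Sev_sub (l : ℕ) : ∀ j, ∀ t ∈ Sev l j, ∀ A ∈ t, A ⊆ Finset.range (j+1) := by
  induction l with
  | zero =>
      intro j t ht A hA
      rw [Sev] at ht
      split at ht
      · rw [Multiset.mem_singleton.1 ht] at hA
        simp only [List.mem_cons, List.mem_singleton, List.not_mem_nil, or_false] at hA
        rcases hA with rfl | rfl
        · exact Finset.range_subset_range.2 (by omega)
        · intro x hx
          rw [Finset.mem_singleton.1 hx]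
          exact Finset.mem_range.2 (by omega)
      · simp at ht
  | succ l ih =>
      intro j t ht A hA
      rw [Sev] at ht
      obtain ⟨k, hk, ht⟩ := Multiset.mem_bind.1 ht
      obtain ⟨u, hu, rfl⟩ := Multiset.mem_map.1 ht
      have hkj : k < j - 1 := Multiset.mem_range.1 hk
      rcases List.mem_append.1 hA with h | h
      · intro x hx
        have := ih k u hu A h hx
        have := Finset.mem_range.1 this
        exact Finset.mem_range.2 (by omega)
      · rcases List.mem_cons.1 h with rfl | h
        · intro x hx
          have := Finset.mem_Ioo.1 hx
          exact Finset.mem_range.2 (by omega)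
        · rcases List.mem_singleton.1 h with rfl
          intro x hx
          rw [Finset.mem_singleton.1 hx]
          exact Finset.mem_range.2 (by omega)

lemma Dod_len (l m : ℕ) : ∀ t ∈ Dod l m, t.length = 2*l+1 := by
  cases l with
  | zero =>
      intro t ht
      rw [Dod] at ht
      rw [Multiset.mem_singleton.1 ht]
      rfl
  | succ l =>
      intro t ht
      rw [Dod] at ht
      obtain ⟨j, hj, ht⟩ := Multiset.mem_bind.1 ht
      obtain ⟨u, hu, rfl⟩ := Multiset.mem_map.1 ht
      rw [List.length_append, Sev_len l j u hu]
      simp; omega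

lemma Dev_len (l m : ℕ) : ∀ t ∈ Dev l m, t.length = 2*l := by
  cases l with
  | zero =>
      intro t ht
      rw [Dev] at ht
      rw [Multiset.mem_singleton.1 ht]
      rfl
  | succ l =>
      intro t ht
      rw [Dev] at ht
      obtain ⟨j, hj, ht⟩ := Multiset.mem_bind.1 ht
      rw [Sev_len l j t ht]
      omega

lemma Dod_sub (l m : ℕ) : ∀ t ∈ Dod l m, ∀ A ∈ t, A ⊆ Finset.range m := by
  cases l with
  | zero =>
      intro t ht A hA
      rw [Dod] at ht
      rw [Multiset.mem_singleton.1 ht] at hA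
      simp only [List.mem_singleton] at hA
      subst hA
      exact Finset.Subset.refl _
  | succ l =>
      intro t ht A hA
      rw [Dod] at ht
      obtain ⟨j, hj, ht⟩ := Multiset.mem_bind.1 ht
      obtain ⟨u, hu, rfl⟩ := Multiset.mem_map.1 ht
      have hjm : j < m - 1 := Multiset.mem_range.1 hj
      rcases List.mem_append.1 hA with h | h
      · intro x hx
        have := Finset.mem_range.1 (Sev_sub l j u hu A h hx)
        exact Finset.mem_range.2 (by omega)
      · rcases List.mem_singleton.1 h with rfl
        intro x hx
        have := Finset.mem_Ioo.1 hx
        exact Finset.mem_range.2 (by omega)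

lemma Dev_sub (l m : ℕ) : ∀ t ∈ Dev l m, ∀ A ∈ t, A ⊆ Finset.range m := by
  cases l with
  | zero =>
      intro t ht A hA
      rw [Dev] at ht
      rw [Multiset.mem_singleton.1 ht] at hA
      simp at hA
  | succ l =>
      intro t ht A hA
      rw [Dev] at ht
      obtain ⟨j, hj, ht⟩ := Multiset.mem_bind.1 ht
      have hjm : j < m := Multiset.mem_range.1 hj
      intro x hx
      have := Finset.mem_range.1 (Sev_sub l j t ht A hA hx)
      exact Finset.mem_range.2 (by omega)

lemma indicator_sum (M : ℕ) (A : Finset ℕ) (hA : A ⊆ Finset.range M) :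
    (∑ k : Fin M, C (if (k : ℕ) ∈ A then (1:ℝ) else 0) * X (k : ℕ))
      = ∑ a ∈ A, (X a : MvPolynomial ℕ ℝ) := by
  rw [Fin.sum_univ_eq_sum_range (fun k => C (if k ∈ A then (1:ℝ) else 0) * X k) M]
  have : ∀ k ∈ Finset.range M,
      C (if k ∈ A then (1:ℝ) else 0) * X k = if k ∈ A then (X k : MvPolynomial ℕ ℝ) else 0 := by
    intro k _
    split_ifs <;> simp
  rw [Finset.sum_congr rfl this, Finset.sum_ite_mem, Finset.inter_eq_right.2 hA]

lemma list_sum_eq {α β : Type*} [AddCommMonoid β] (T : List α) (F : α → β) :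
    (T.map F).sum = ∑ i : Fin T.length, F (T.get i) := by
  conv_lhs => rw [← List.ofFn_get T]
  rw [List.map_ofFn, List.sum_ofFn]
  rfl

lemma list_prod_eq {α β : Type*} [CommMonoid β] (T : List α) (F : α → β) :
    (T.map F).prod = ∏ i : Fin T.length, F (T.get i) := by
  conv_lhs => rw [← List.ofFn_get T]
  rw [List.map_ofFn, List.prod_ofFn]
  rfl

lemma assemble (M d r : ℕ) (D : Multiset (List (Finset ℕ)))
    (hlen : ∀ t ∈ D, t.length = d)
    (hsub : ∀ t ∈ D, ∀ A ∈ t, A ⊆ Finset.range M)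
    (hcard : Multiset.card D ≤ r)
    (hd : 0 < d ∨ r ≤ Multiset.card D)
    (hsum : (D.map tval).sum = Pm d M) :
    ∃ L : Fin r → Fin d → Fin M → ℝ,
      (∑ S ∈ Finset.univ.powersetCard d, ∏ i ∈ S, (X i : MvPolynomial (Fin M) ℝ))
        = ∑ i, ∏ j, (∑ k, C (L i j k) * X k) := by
  classical
  set T : List (List (Finset ℕ)) :=
    D.toList ++ List.replicate (r - Multiset.card D) (List.replicate d ∅) with hTdef
  have hT : T.length = r := by
    rw [hTdef, List.length_append, List.length_replicate, Multiset.length_toList]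
    omega
  set Aset : ℕ → ℕ → Finset ℕ := fun i j => (T.getD i []).getD j ∅ with hAdef
  have hAsub : ∀ i j, Aset i j ⊆ Finset.range M := by
    intro i j
    rcases Nat.lt_or_ge i T.length with hi | hi
    · have hmem : T.getD i [] ∈ T := by
        rw [List.getD_eq_getElem _ _ hi]; exact List.getElem_mem hi
      rcases List.mem_append.1 (hTdef ▸ hmem) with h | h
      · have hD : T.getD i [] ∈ D := Multiset.mem_toList.1 h
        rcases Nat.lt_or_ge j (T.getD i []).length with hj | hj
        · rw [hAdef]
          simp only
          rw [List.getD_eq_getElem _ _ hj]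
          exact hsub _ hD _ (List.getElem_mem hj)
        · rw [hAdef]; simp only
          rw [List.getD_eq_default _ _ hj]
          exact Finset.empty_subset _
      · have : T.getD i [] = List.replicate d ∅ := List.eq_of_mem_replicate h
        rw [hAdef]; simp only [this]
        rcases Nat.lt_or_ge j d with hj | hj
        · rw [List.getD_eq_getElem _ _ (by simpa using hj), List.getElem_replicate]
          exact Finset.empty_subset _
        · rw [List.getD_eq_default _ _ (by simpa using hj)]
          exact Finset.empty_subset _
    · rw [hAdef]; simp only
      rw [List.getD_eq_default _ _ hi]
      simp
  refine ⟨fun i j k => if (k : ℕ) ∈ Aset i j then 1 else 0, ?_⟩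
  apply MvPolynomial.rename_injective (Fin.val : Fin M → ℕ) Fin.val_injective
  have hL : (rename (Fin.val : Fin M → ℕ))
      (∑ S ∈ Finset.univ.powersetCard d, ∏ i ∈ S, (X i : MvPolynomial (Fin M) ℝ))
      = Pm d M := by
    rw [map_sum]
    have : ∀ S ∈ Finset.univ.powersetCard d,
        (rename (Fin.val : Fin M → ℕ)) (∏ i ∈ S, (X i : MvPolynomial (Fin M) ℝ))
          = ∏ i ∈ S, (X (i : ℕ) : MvPolynomial ℕ ℝ) := by
      intro S _
      rw [map_prod]
      exact Finset.prod_congr rfl fun i _ => rename_X _ i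
    rw [Finset.sum_congr rfl this, Pm]
    rw [show Finset.range M = Finset.map Fin.valEmbedding Finset.univ by
      rw [Fin.map_valEmbedding_univ, Nat.Iio_eq_range]]
    rw [Finset.powersetCard_map, Finset.sum_map]
    apply Finset.sum_congr rfl
    intro S _
    simp only [RelEmbedding.coe_toEmbedding, Finset.mapEmbedding_apply]
    rw [Finset.prod_map]
    rfl
  rw [hL]
  -- now the RHS
  rw [map_sum]
  have hterm : ∀ i : Fin r,
      (rename (Fin.val : Fin M → ℕ)) (∏ j : Fin d, ∑ k : Fin M,
          C (if (k:ℕ) ∈ Aset i j then (1:ℝ) else 0) * X k)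
        = ∏ j : Fin d, ∑ a ∈ Aset i j, (X a : MvPolynomial ℕ ℝ) := by
    intro i
    rw [map_prod]
    apply Finset.prod_congr rfl
    intro j _
    rw [map_sum]
    have : ∀ k : Fin M, (rename (Fin.val : Fin M → ℕ))
        (C (if (k:ℕ) ∈ Aset i j then (1:ℝ) else 0) * X k)
        = C (if (k:ℕ) ∈ Aset i j then (1:ℝ) else 0) * X (k:ℕ) := by
      intro k
      rw [map_mul, rename_C, rename_X]
    rw [Fintype.sum_congr _ _ this]
    exact indicator_sum M _ (hAsub i j)
  rw [Fintype.sum_congr _ _ hterm]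
  -- sum over Fin r of F (T.getD i []) where F t = ∏ j : Fin d, ∑ a ∈ t.getD j ∅, X a
  set F : List (Finset ℕ) → MvPolynomial ℕ ℝ :=
    fun t => ∏ j : Fin d, ∑ a ∈ t.getD (j:ℕ) ∅, (X a : MvPolynomial ℕ ℝ) with hFdef
  have hstep2 : ∑ i : Fin r, ∏ j : Fin d, ∑ a ∈ Aset i j, (X a : MvPolynomial ℕ ℝ)
      = (T.map F).sum := by
    rw [list_sum_eq]
    apply Fintype.sum_equiv (finCongr hT.symm)
    intro i
    rw [hFdef]
    apply Finset.prod_congr rfl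
    intro j _
    have : Aset (i:ℕ) (j:ℕ) = (T.get (finCongr hT.symm i)).getD (j:ℕ) ∅ := by
      rw [hAdef]
      simp only
      congr 1
      rw [List.getD_eq_getElem _ _ (by rw [hT]; exact i.2)]
      rfl
    rw [this]
  rw [hstep2, hTdef, List.map_append, List.sum_append]
  have hpad : ((List.replicate (r - Multiset.card D) (List.replicate d ∅)).map F).sum = 0 := by
    rcases hd with hd | hd
    · rw [List.map_replicate, List.sum_replicate]
      have : F (List.replicate d ∅) = 0 := by
        rw [hFdef]
        simp only
        have : ∀ j : Fin d, ∑ a ∈ (List.replicate d ∅).getD (j:ℕ) ∅, (X a : MvPolynomial ℕ ℝ) = 0 := by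
          intro j
          rw [List.getD_eq_getElem _ _ (by simpa using j.2), List.getElem_replicate,
            Finset.sum_empty]
        rw [Fintype.prod_congr _ _ this, Finset.prod_const, zero_pow]
        simpa using Nat.pos_iff_ne_zero.1 hd
      rw [this, smul_zero]
    · rw [Nat.sub_eq_zero_of_le hd]
      simp
  rw [hpad, add_zero]
  have hmain : (D.toList.map F).sum = (D.toList.map tval).sum := by
    congr 1
    apply List.map_congr_left
    intro t ht
    have htD : t ∈ D := Multiset.mem_toList.1 ht
    have hlt : t.length = d := hlen t htD
    rw [hFdef, tval, list_prod_eq]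
    show ∏ j : Fin d, ∑ a ∈ t.getD (j:ℕ) ∅, (X a : MvPolynomial ℕ ℝ) = _
    apply Fintype.prod_equiv (finCongr hlt.symm)
    intro j
    simp only [finCongr_apply, Fin.coe_cast]
    rw [List.getD_eq_getElem _ _ (by rw [hlt]; exact j.2)]
    rfl
  rw [hmain]
  have : (D.toList.map tval).sum = (D.map tval).sum := by
    conv_rhs => rw [← Multiset.coe_toList D]
    rw [Multiset.map_coe, Multiset.sum_coe]
  rw [this, hsum]

end ChowAux


/-- the Chow rank of `e_{2l+1}(x₁,…,x_{n+1})` is at most `C(n−l, l)`, and the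
Chow rank of `e_{2l}(x₁,…,x_n)` is at most `C(n−l, l)`: each is a sum of that many
products of linear forms. -/
theorem chow_rank_elementary_symmetric_le (n l : ℕ) :
    (∃ L : Fin (Nat.choose (n - l) l) → Fin (2 * l + 1) → Fin (n + 1) → ℝ,
      (∑ S ∈ Finset.univ.powersetCard (2 * l + 1), ∏ i ∈ S,
          (X i : MvPolynomial (Fin (n + 1)) ℝ)) =
        ∑ i, ∏ j, (∑ k, C (L i j k) * X k)) ∧
    (∃ L : Fin (Nat.choose (n - l) l) → Fin (2 * l) → Fin n → ℝ,
      (∑ S ∈ Finset.univ.powersetCard (2 * l), ∏ i ∈ S,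
          (X i : MvPolynomial (Fin n) ℝ)) =
        ∑ i, ∏ j, (∑ k, C (L i j k) * X k)) := by
  constructor
  · apply assemble (n+1) (2*l+1) (Nat.choose (n-l) l) (Dod l (n+1))
      (Dod_len l (n+1)) (Dod_sub l (n+1))
      (by simpa using Dod_card l (n+1))
      (Or.inl (by omega))
      (Dod_sum l (n+1))
  · apply assemble n (2*l) (Nat.choose (n-l) l) (Dev l n)
      (Dev_len l n) (Dev_sub l n)
      (Dev_card l n)
      ?_
      (Dev_sum l n)
    cases l with
    | zero =>
        right
        rw [Dev_zero_card, Nat.choose_zero_right]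
    | succ l => exact Or.inl (by omega)
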